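/- Fix reals γ_t > 0, K_m ≥ 0 and K_I ≥ 0, and define A(v) = √(2·K_m·v/(v + γ_t)), B(v) = √(2·γ_t·K_I/(v + γ_t)), and p_LL(v) = 1 - Q(A(v), B(v)) + (γ_t/(v + γ_t))·exp(-(A(v)² + B(v)²)/2)·I₀(A(v)·B(v)) for v ≥ 0. Then p_LL(0) = 1 and p_LL(v) tends to 0 as v → ∞. -/

import Mathlib

open MeasureTheory Real Set

noncomputable def besselI0 (x : ℝ) : ℝ :=
  ∑' n : ℕ, (x ^ 2 / 4) ^ n / ((Nat.factorial n : ℝ)) ^ 2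

lemma besselI0_summable (x : ℝ) :
    Summable (fun n : ℕ => (x ^ 2 / 4) ^ n / ((Nat.factorial n : ℝ)) ^ 2) := by
  refine Summable.of_nonneg_of_le (fun n => by positivity) (fun n => ?_)
    (Real.summable_pow_div_factorial (x ^ 2 / 4))
  have h1 : (1 : ℝ) ≤ (Nat.factorial n : ℝ) := by
    exact_mod_cast Nat.one_le_iff_ne_zero.mpr (Nat.factorial_ne_zero n)
  have h2 : (0 : ℝ) ≤ (x ^ 2 / 4) ^ n := by positivity
  have h3 : (Nat.factorial n : ℝ) ≤ ((Nat.factorial n : ℝ)) ^ 2 := by nlinarith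
  exact div_le_div_of_nonneg_left h2 (by positivity) h3

lemma besselI0_nonneg (x : ℝ) : 0 ≤ besselI0 x :=
  tsum_nonneg (fun n => by positivity)

lemma besselI0_zero : besselI0 0 = 1 := by
  rw [besselI0, tsum_eq_single 0 (fun n hn => by simp [zero_pow hn])]
  simp

lemma besselI0_mono {x y : ℝ} (hx : 0 ≤ x) (hxy : x ≤ y) : besselI0 x ≤ besselI0 y := by
  refine (besselI0_summable x).tsum_le_tsum (fun n => ?_) (besselI0_summable y)
  have : x ^ 2 ≤ y ^ 2 := by nlinarith
  gcongr

lemma besselI0_le_exp {x : ℝ} (hx : 0 ≤ x) : besselI0 x ≤ Real.exp x := by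
  have hexp : Real.exp x = ∑' n : ℕ, x ^ n / (Nat.factorial n : ℝ) := by
    rw [Real.exp_eq_exp_ℝ, NormedSpace.exp_eq_tsum_div]
  rw [besselI0, hexp]
  refine (besselI0_summable x).tsum_le_tsum_of_inj (fun n : ℕ => 2 * n) (fun a b h => Nat.eq_of_mul_eq_mul_left two_pos h)
    (fun c _ => by positivity) (fun n => ?_)
    (Real.summable_pow_div_factorial x)
  have hfact : ((Nat.factorial (2 * n) : ℝ)) ≤ 4 ^ n * ((Nat.factorial n : ℝ)) ^ 2 := by
    have hc : (2 * n).choose n ≤ 4 ^ n := by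
      calc (2 * n).choose n ≤ ∑ m ∈ Finset.range (2 * n + 1), (2 * n).choose m :=
            Finset.single_le_sum (fun i _ => Nat.zero_le _) (Finset.mem_range.mpr (by omega))
        _ = 2 ^ (2 * n) := Nat.sum_range_choose _
        _ = 4 ^ n := by rw [pow_mul]; norm_num
    have heq : (2 * n).choose n * Nat.factorial n * Nat.factorial n = Nat.factorial (2 * n) := by
      have := Nat.choose_mul_factorial_mul_factorial (Nat.le_mul_of_pos_left n two_pos)
      simpa [two_mul] using this
    have : Nat.factorial (2 * n) ≤ 4 ^ n * (Nat.factorial n * Nat.factorial n) := by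
      rw [← heq]
      nlinarith [Nat.factorial_pos n]
    calc ((Nat.factorial (2 * n) : ℝ)) ≤ ((4 ^ n * (Nat.factorial n * Nat.factorial n) : ℕ) : ℝ) := by
          exact_mod_cast this
      _ = 4 ^ n * ((Nat.factorial n : ℝ)) ^ 2 := by push_cast; ring
  have hL : (x ^ 2 / 4) ^ n / ((Nat.factorial n : ℝ)) ^ 2
      = x ^ (2 * n) / (4 ^ n * ((Nat.factorial n : ℝ)) ^ 2) := by
    rw [div_pow, ← pow_mul, div_div]
  rw [hL]
  have h2 : (0 : ℝ) ≤ x ^ (2 * n) := pow_nonneg hx _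
  exact div_le_div_of_nonneg_left h2 (by positivity) hfact

lemma besselI0_measurable : Measurable besselI0 := by
  apply measurable_of_tendsto_metrizable
    (f := fun N x => ∑ n ∈ Finset.range N, (x ^ 2 / 4) ^ n / ((Nat.factorial n : ℝ)) ^ 2)
  · intro N
    exact Finset.measurable_sum _ (fun n _ =>
      (((measurable_id.pow_const 2).div_const 4).pow_const n).div_const _)
  · rw [tendsto_pi_nhds]
    intro x
    exact (besselI0_summable x).hasSum.tendsto_sum_nat
noncomputable def marcumQ (a b : ℝ) : ℝ :=
  ∫ x in Set.Ioi b, x * Real.exp (-(x ^ 2 + a ^ 2) / 2) * besselI0 (a * x)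

lemma marcumQ_meas (a : ℝ) :
    Measurable (fun x => x * Real.exp (-(x ^ 2 + a ^ 2) / 2) * besselI0 (a * x)) := by
  exact (measurable_id.mul
    (((((measurable_id.pow_const 2).add_const (a ^ 2)).neg).div_const 2).exp)).mul
    (besselI0_measurable.comp (measurable_id.const_mul a))

lemma integrable_shifted_gaussian (a : ℝ) :
    Integrable (fun x : ℝ => x * Real.exp (-(1 / 2) * (x - a) ^ 2)) := by
  have h1 : Integrable (fun y : ℝ => y * Real.exp (-(1 / 2) * y ^ 2) +
      a * Real.exp (-(1 / 2) * y ^ 2)) :=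
    (integrable_mul_exp_neg_mul_sq (by norm_num : (0:ℝ) < 1/2)).add
      ((integrable_exp_neg_mul_sq (by norm_num : (0:ℝ) < 1/2)).const_mul a)
  have h2 := h1.comp_sub_right a
  refine h2.congr ?_
  filter_upwards with x
  ring_nf

lemma integrableOn_marcum_integrand {a : ℝ} (ha : 0 ≤ a) :
    IntegrableOn (fun x => x * Real.exp (-(x ^ 2 + a ^ 2) / 2) * besselI0 (a * x))
      (Set.Ioi 0) := by
  refine Integrable.mono' (integrable_shifted_gaussian a).integrableOn
    (marcumQ_meas a).aestronglyMeasurable ?_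
  filter_upwards [ae_restrict_mem measurableSet_Ioi] with x hx
  have hx0 : (0:ℝ) < x := hx
  have hax : 0 ≤ a * x := mul_nonneg ha hx0.le
  have hnn : 0 ≤ x * Real.exp (-(x ^ 2 + a ^ 2) / 2) * besselI0 (a * x) := by
    have := besselI0_nonneg (a * x)
    positivity
  rw [Real.norm_of_nonneg hnn]
  calc x * Real.exp (-(x ^ 2 + a ^ 2) / 2) * besselI0 (a * x)
      ≤ x * Real.exp (-(x ^ 2 + a ^ 2) / 2) * Real.exp (a * x) := by
        have := Real.exp_pos (-(x ^ 2 + a ^ 2) / 2)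
        exact mul_le_mul_of_nonneg_left (besselI0_le_exp hax) (by positivity)
    _ = x * Real.exp (-(1 / 2) * (x - a) ^ 2) := by
        rw [mul_assoc, ← Real.exp_add]
        congr 1
        ring

lemma integral_pow_mul_gaussian (n : ℕ) :
    ∫ x in Set.Ioi (0:ℝ), x ^ (2 * n + 1) * Real.exp (-(1 / 2) * x ^ 2)
      = 2 ^ n * (Nat.factorial n : ℝ) := by
  have h := integral_rpow_mul_exp_neg_mul_rpow (p := 2) (q := (2 * n + 1 : ℕ))
    (b := 1 / 2) (by norm_num) (by push_cast; linarith [Nat.cast_nonneg (α := ℝ) n]) (by norm_num)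
  have heq : (fun x : ℝ => x ^ ((2 * n + 1 : ℕ) : ℝ) * Real.exp (-(1 / 2) * x ^ (2:ℝ)))
      = fun x : ℝ => x ^ (2 * n + 1) * Real.exp (-(1 / 2) * x ^ 2) := by
    funext x
    rw [Real.rpow_natCast, show ((2:ℝ)) = ((2:ℕ):ℝ) by norm_num, Real.rpow_natCast]
  rw [heq] at h
  rw [h]
  have harg : (((2 * n + 1 : ℕ) : ℝ) + 1) / 2 = (n : ℝ) + 1 := by push_cast; ring
  rw [show (-(((2 * n + 1 : ℕ) : ℝ) + 1) / 2) = -(((n:ℝ)) + 1) by push_cast; ring,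
    harg, Real.Gamma_nat_eq_factorial]
  have : ((1:ℝ) / 2) ^ (-(((n:ℝ)) + 1)) = 2 ^ (n + 1) := by
    rw [show -((n:ℝ) + 1) = -(((n + 1 : ℕ)):ℝ) by push_cast; ring,
      Real.rpow_neg (by norm_num), Real.rpow_natCast, one_div, inv_pow, inv_inv]
  rw [this]
  push_cast
  ring
lemma marcumQ_zero_right {a : ℝ} (ha : 0 ≤ a) : marcumQ a 0 = 1 := by
  set c : ℕ → ℝ := fun n => Real.exp (-a ^ 2 / 2) * a ^ (2 * n) / (4 ^ n * (Nat.factorial n : ℝ) ^ 2)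
    with hc
  have hcnn : ∀ n, 0 ≤ c n := fun n => by
    have := pow_nonneg ha (2 * n)
    positivity
  set F : ℕ → ℝ → ℝ := fun n x => c n * (x ^ (2 * n + 1) * Real.exp (-(1 / 2) * x ^ 2)) with hF
  have hpt : ∀ x : ℝ, x * Real.exp (-(x ^ 2 + a ^ 2) / 2) * besselI0 (a * x)
      = ∑' n, F n x := by
    intro x
    rw [besselI0, ← tsum_mul_left]
    congr 1
    funext n
    have hsplit : Real.exp (-(x ^ 2 + a ^ 2) / 2)
        = Real.exp (-(1 / 2) * x ^ 2) * Real.exp (-a ^ 2 / 2) := by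
      rw [← Real.exp_add]; congr 1; ring
    rw [hF, hc, hsplit]
    have h4 : ((4:ℝ)) ^ n ≠ 0 := by positivity
    have hf : ((Nat.factorial n : ℝ)) ^ 2 ≠ 0 := by positivity
    field_simp
    ring_nf
    rw [mul_assoc, ← mul_pow]; norm_num
  have hInt : ∀ n, Integrable (F n) (volume.restrict (Set.Ioi (0:ℝ))) := by
    intro n
    have h1 : IntegrableOn (fun x : ℝ => x ^ ((2 * n + 1 : ℕ) : ℝ) * Real.exp (-(1/2) * x ^ 2))
        (Set.Ioi 0) := integrableOn_rpow_mul_exp_neg_mul_sq (by norm_num)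
      (by push_cast; linarith [Nat.cast_nonneg (α := ℝ) n])
    have heq : (fun x : ℝ => x ^ ((2 * n + 1 : ℕ) : ℝ) * Real.exp (-(1/2) * x ^ 2))
        = fun x : ℝ => x ^ (2 * n + 1) * Real.exp (-(1/2) * x ^ 2) := by
      funext x; rw [Real.rpow_natCast]
    rw [heq] at h1
    exact (h1.const_mul (c n))
  have hIval : ∀ n, ∫ x in Set.Ioi (0:ℝ), F n x
      = Real.exp (-a ^ 2 / 2) * ((a ^ 2 / 2) ^ n / (Nat.factorial n : ℝ)) := by
    intro n
    rw [hF]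
    simp only []
    rw [MeasureTheory.integral_const_mul, integral_pow_mul_gaussian, hc]
    have h2 : ((2:ℝ)) ^ n ≠ 0 := by positivity
    have hf : ((Nat.factorial n : ℝ)) ≠ 0 := by positivity
    have h4 : ((4:ℝ)) ^ n = 2 ^ n * 2 ^ n := by rw [← mul_pow]; norm_num
    simp only [pow_mul a, div_pow, h4]
    field_simp
  have hnorm : ∀ n, ∫ x in Set.Ioi (0:ℝ), ‖F n x‖
      = Real.exp (-a ^ 2 / 2) * ((a ^ 2 / 2) ^ n / (Nat.factorial n : ℝ)) := by
    intro n
    rw [← hIval n]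
    apply integral_congr_ae
    filter_upwards [ae_restrict_mem measurableSet_Ioi] with x hx
    have hx0 : (0:ℝ) < x := hx
    have : 0 ≤ F n x := by
      have := hcnn n
      have : (0:ℝ) ≤ x ^ (2 * n + 1) := by positivity
      positivity
    exact Real.norm_of_nonneg this
  have hSum : Summable fun n => ∫ x in Set.Ioi (0:ℝ), ‖F n x‖ := by
    simp only [hnorm]
    exact (Real.summable_pow_div_factorial (a ^ 2 / 2)).mul_left _
  have key := MeasureTheory.integral_tsum_of_summable_integral_norm hInt hSum
  rw [marcumQ]
  calc (∫ x in Set.Ioi (0:ℝ), x * Real.exp (-(x ^ 2 + a ^ 2) / 2) * besselI0 (a * x))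
      = ∫ x in Set.Ioi (0:ℝ), ∑' n, F n x := by
        apply integral_congr_ae
        filter_upwards with x using hpt x
    _ = ∑' n, ∫ x in Set.Ioi (0:ℝ), F n x := key.symm
    _ = Real.exp (-a ^ 2 / 2) * ∑' n, ((a ^ 2 / 2) ^ n / (Nat.factorial n : ℝ)) := by
        simp only [hIval]
        exact tsum_mul_left
    _ = 1 := by
        have : (∑' n : ℕ, ((a ^ 2 / 2) ^ n / (Nat.factorial n : ℝ))) = Real.exp (a ^ 2 / 2) := by
          rw [Real.exp_eq_exp_ℝ, NormedSpace.exp_eq_tsum_div]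
        rw [this, ← Real.exp_add, show -a ^ 2 / 2 + a ^ 2 / 2 = 0 by ring, Real.exp_zero]
lemma marcumQ_zero_left (b : ℝ) : marcumQ 0 b = Real.exp (-(1 / 2) * b ^ 2) := by
  rw [marcumQ]
  have hb0 : besselI0 0 = 1 := besselI0_zero
  have heq : (fun x : ℝ => x * Real.exp (-(x ^ 2 + (0:ℝ) ^ 2) / 2) * besselI0 (0 * x))
      = fun x : ℝ => x * Real.exp (-(1 / 2) * x ^ 2) := by
    funext x
    rw [zero_mul, hb0, mul_one]
    congr 1
    ring_nf
  rw [heq]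
  have hderiv : ∀ x ∈ Set.Ici b, HasDerivAt (fun x : ℝ => -Real.exp (-(1 / 2) * x ^ 2))
      (x * Real.exp (-(1 / 2) * x ^ 2)) x := by
    intro x _
    have h := (((hasDerivAt_pow 2 x).const_mul (-(1/2) : ℝ)).exp).neg
    refine h.congr_deriv ?_
    simp
    ring
  have hint : IntegrableOn (fun x : ℝ => x * Real.exp (-(1 / 2) * x ^ 2)) (Set.Ioi b) :=
    (integrable_mul_exp_neg_mul_sq (by norm_num : (0:ℝ) < 1/2)).integrableOn
  have htend : Filter.Tendsto (fun x : ℝ => -Real.exp (-(1 / 2) * x ^ 2))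
      Filter.atTop (nhds 0) := by
    rw [show (0:ℝ) = -0 by norm_num]
    apply Filter.Tendsto.neg
    apply Real.tendsto_exp_atBot.comp
    apply Filter.Tendsto.const_mul_atTop_of_neg (by norm_num : (-(1/2) : ℝ) < 0)
    exact Filter.tendsto_pow_atTop (by norm_num)
  rw [MeasureTheory.integral_Ioi_of_hasDerivAt_of_tendsto' hderiv hint htend]
  simp

lemma marcumQ_bounds {a b : ℝ} (ha : 0 ≤ a) (hb : 0 ≤ b) :
    0 ≤ 1 - marcumQ a b ∧ 1 - marcumQ a b ≤ b ^ 2 / 2 * besselI0 (a * b) := by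
  set f : ℝ → ℝ := fun x => x * Real.exp (-(x ^ 2 + a ^ 2) / 2) * besselI0 (a * x) with hf
  have hint := integrableOn_marcum_integrand ha
  have hsub1 : Set.Ioc (0:ℝ) b ⊆ Set.Ioi 0 := Set.Ioc_subset_Ioi_self
  have hsub2 : Set.Ioi b ⊆ Set.Ioi 0 := Set.Ioi_subset_Ioi hb
  have hsplit : marcumQ a 0 = (∫ x in Set.Ioc (0:ℝ) b, f x) + marcumQ a b := by
    rw [marcumQ, marcumQ, ← hf]
    rw [← MeasureTheory.setIntegral_union (Set.Ioc_disjoint_Ioi le_rfl) measurableSet_Ioi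
      (hint.mono_set hsub1) (hint.mono_set hsub2), Set.Ioc_union_Ioi_eq_Ioi hb]
  rw [marcumQ_zero_right ha] at hsplit
  have h1 : 1 - marcumQ a b = ∫ x in Set.Ioc (0:ℝ) b, f x := by linarith
  constructor
  · rw [h1]
    apply MeasureTheory.setIntegral_nonneg measurableSet_Ioc
    intro x hx
    have := besselI0_nonneg (a * x)
    have hx0 := hx.1.le
    positivity
  · rw [h1]
    have hle : ∀ x ∈ Set.Ioc (0:ℝ) b, f x ≤ x * besselI0 (a * b) := by
      intro x hx
      have hx0 : 0 < x := hx.1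
      have hIle : besselI0 (a * x) ≤ besselI0 (a * b) :=
        besselI0_mono (mul_nonneg ha hx0.le) (mul_le_mul_of_nonneg_left hx.2 ha)
      have hexp : Real.exp (-(x ^ 2 + a ^ 2) / 2) ≤ 1 := by
        apply Real.exp_le_one_iff.mpr
        nlinarith [sq_nonneg x, sq_nonneg a]
      calc f x ≤ x * Real.exp (-(x ^ 2 + a ^ 2) / 2) * besselI0 (a * b) := by
            have h := Real.exp_pos (-(x ^ 2 + a ^ 2) / 2)
            exact mul_le_mul_of_nonneg_left hIle (by positivity)
        _ ≤ x * 1 * besselI0 (a * b) := by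
            have := besselI0_nonneg (a * b)
            have : 0 ≤ besselI0 (a * b) := this
            apply mul_le_mul_of_nonneg_right _ this
            exact mul_le_mul_of_nonneg_left hexp hx0.le
        _ = x * besselI0 (a * b) := by ring
    calc (∫ x in Set.Ioc (0:ℝ) b, f x) ≤ ∫ x in Set.Ioc (0:ℝ) b, x * besselI0 (a * b) := by
          apply MeasureTheory.setIntegral_mono_on (hint.mono_set hsub1)
            ((continuous_id.mul continuous_const).integrableOn_Ioc) measurableSet_Ioc hle
      _ = b ^ 2 / 2 * besselI0 (a * b) := by
          rw [← intervalIntegral.integral_of_le hb, intervalIntegral.integral_mul_const,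
            integral_id]
          ring
noncomputable def ricianPDF (K h : ℝ) : ℝ :=
  (1 / 2) * Real.exp (-K - h / 2) * besselI0 (Real.sqrt (2 * K * h))

noncomputable def Afun (Km γt v : ℝ) : ℝ := Real.sqrt (2 * Km * v / (v + γt))

noncomputable def Bfun (KI γt v : ℝ) : ℝ := Real.sqrt (2 * γt * KI / (v + γt))

noncomputable def pLL (γt Km KI v : ℝ) : ℝ :=
  1 - marcumQ (Afun Km γt v) (Bfun KI γt v) +
    (γt / (v + γt)) * Real.exp (-((Afun Km γt v) ^ 2 + (Bfun KI γt v) ^ 2) / 2) *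
      besselI0 (Afun Km γt v * Bfun KI γt v)

noncomputable def pNN (γt v : ℝ) : ℝ := γt / (v + γt)

theorem stmt_11 (γt Km KI : ℝ) (hγt : 0 < γt) (hKm : 0 ≤ Km) (hKI : 0 ≤ KI) :
    pLL γt Km KI 0 = 1 ∧
    Filter.Tendsto (pLL γt Km KI) Filter.atTop (nhds 0) := by
  constructor
  · have hA0 : Afun Km γt 0 = 0 := by simp [Afun]
    have hB : Bfun KI γt 0 = Real.sqrt (2 * KI) := by
      rw [Bfun]
      congr 1
      rw [zero_add]
      field_simp
    have hBsq : (Real.sqrt (2 * KI)) ^ 2 = 2 * KI := Real.sq_sqrt (by linarith)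
    rw [pLL, hA0, hB, marcumQ_zero_left, zero_mul, besselI0_zero, zero_add,
      div_self hγt.ne', hBsq]
    rw [show -((0:ℝ) ^ 2 + 2 * KI) / 2 = -(1/2) * (2 * KI) by ring]
    ring
  · set S := Real.sqrt (2 * Km) with hS
    set T := Real.sqrt (2 * KI) with hT
    set C := besselI0 (S * T) with hCdef
    have hC0 : 0 ≤ C := besselI0_nonneg _
    have tendsto_vγ : Filter.Tendsto (fun v : ℝ => v + γt) Filter.atTop Filter.atTop :=
      Filter.tendsto_atTop_add_const_right _ γt Filter.tendsto_id
    have hdiv : ∀ c : ℝ, Filter.Tendsto (fun v : ℝ => c / (v + γt)) Filter.atTop (nhds 0) :=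
      fun c => Filter.Tendsto.div_atTop tendsto_const_nhds tendsto_vγ
    have hfacts : ∀ᶠ v : ℝ in Filter.atTop, 0 ≤ v := Filter.eventually_ge_atTop 0
    -- common bounds
    have hbounds : ∀ v : ℝ, 0 ≤ v →
        Afun Km γt v * Bfun KI γt v ≤ S * T ∧
        besselI0 (Afun Km γt v * Bfun KI γt v) ≤ C ∧
        (Bfun KI γt v) ^ 2 = 2 * γt * KI / (v + γt) := by
      intro v hv
      have hvγ : 0 < v + γt := by linarith
      have hAle : Afun Km γt v ≤ S := by
        apply Real.sqrt_le_sqrt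
        rw [div_le_iff₀ hvγ]
        nlinarith
      have hBle : Bfun KI γt v ≤ T := by
        apply Real.sqrt_le_sqrt
        rw [div_le_iff₀ hvγ]
        nlinarith
      have hABle : Afun Km γt v * Bfun KI γt v ≤ S * T :=
        mul_le_mul hAle hBle (Real.sqrt_nonneg _) (Real.sqrt_nonneg _)
      refine ⟨hABle, besselI0_mono (mul_nonneg (Real.sqrt_nonneg _) (Real.sqrt_nonneg _)) hABle,
        Real.sq_sqrt (by positivity)⟩
    have h1 : Filter.Tendsto (fun v => 1 - marcumQ (Afun Km γt v) (Bfun KI γt v))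
        Filter.atTop (nhds 0) := by
      apply squeeze_zero'
      · filter_upwards [hfacts] with v hv
        exact (marcumQ_bounds (Real.sqrt_nonneg _) (Real.sqrt_nonneg _)).1
      · filter_upwards [hfacts] with v hv
        obtain ⟨hAB, hI, hBsq⟩ := hbounds v hv
        have hvγ : 0 < v + γt := by linarith
        calc 1 - marcumQ (Afun Km γt v) (Bfun KI γt v)
            ≤ (Bfun KI γt v) ^ 2 / 2 * besselI0 (Afun Km γt v * Bfun KI γt v) :=
              (marcumQ_bounds (Real.sqrt_nonneg _) (Real.sqrt_nonneg _)).2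
          _ ≤ (Bfun KI γt v) ^ 2 / 2 * C := by
              apply mul_le_mul_of_nonneg_left hI (by positivity)
          _ = γt * KI / (v + γt) * C := by rw [hBsq]; ring
      · simpa using (hdiv (γt * KI)).mul_const C
    have h2 : Filter.Tendsto (fun v => (γt / (v + γt)) *
        Real.exp (-((Afun Km γt v) ^ 2 + (Bfun KI γt v) ^ 2) / 2) *
        besselI0 (Afun Km γt v * Bfun KI γt v)) Filter.atTop (nhds 0) := by
      apply squeeze_zero'
      · filter_upwards [hfacts] with v hv
        have hvγ : 0 < v + γt := by linarith
        have hI := besselI0_nonneg (Afun Km γt v * Bfun KI γt v)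
        positivity
      · filter_upwards [hfacts] with v hv
        obtain ⟨hAB, hI, hBsq⟩ := hbounds v hv
        have hvγ : 0 < v + γt := by linarith
        have hexp : Real.exp (-((Afun Km γt v) ^ 2 + (Bfun KI γt v) ^ 2) / 2) ≤ 1 := by
          apply Real.exp_le_one_iff.mpr
          nlinarith [sq_nonneg (Afun Km γt v), sq_nonneg (Bfun KI γt v)]
        have hdd : 0 ≤ γt / (v + γt) := by positivity
        calc (γt / (v + γt)) * Real.exp (-((Afun Km γt v) ^ 2 + (Bfun KI γt v) ^ 2) / 2) *
              besselI0 (Afun Km γt v * Bfun KI γt v)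
            ≤ (γt / (v + γt)) * Real.exp (-((Afun Km γt v) ^ 2 + (Bfun KI γt v) ^ 2) / 2) * C := by
              apply mul_le_mul_of_nonneg_left hI (by positivity)
          _ ≤ (γt / (v + γt)) * 1 * C := by
              apply mul_le_mul_of_nonneg_right _ hC0
              exact mul_le_mul_of_nonneg_left hexp hdd
          _ = γt / (v + γt) * C := by ring
      · simpa using (hdiv γt).mul_const C
    have heq : pLL γt Km KI = fun v =>
        (1 - marcumQ (Afun Km γt v) (Bfun KI γt v)) +
        (γt / (v + γt)) * Real.exp (-((Afun Km γt v) ^ 2 + (Bfun KI γt v) ^ 2) / 2) *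
          besselI0 (Afun Km γt v * Bfun KI γt v) := rfl
    rw [heq]
    simpa using h1.add h2
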